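/- arXiv:1302.2678 — 4 statements merged into one kernel-verified Lean document; each statement's English description precedes it below -/
import Mathlib

section
/- With the setup below, assume in addition that Q is invertible and that 2A = QD + DQᵀ. Let μ ∈ ℝ^m, and set μ̄ := G^{−1/2} Uᵀ μ and γ̄ := 2 G^{1/2} Uᵀ D^{−1} Q^{−1} μ. Then N̄ᵀ γ̄ − T̄ᵀ γ̄ = 2 N̄ᵀ μ̄; equivalently, since N̄ is invertible, (I − (N̄ᵀ)^{−1} T̄ᵀ) γ̄ = 2 μ̄. -/
open Matrix

/-- Setup: `A` is an `m × m` real symmetric positive definite matrix, `D = diag(A)`,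
`U` is orthogonal with `G := Uᵀ A U` diagonal, `Q` is invertible and satisfies the
skew symmetry condition `2A = QD + DQᵀ`,
`N̄ := G^{1/2} Uᵀ D^{-1/2}` and `T̄ := G^{-1/2} Uᵀ Q D^{1/2} - N̄`.
For `μ ∈ ℝ^m`, set `μ̄ := G^{-1/2} Uᵀ μ` and `γ̄ := 2 G^{1/2} Uᵀ D^{-1} Q^{-1} μ`.
Claim: `N̄ᵀ γ̄ - T̄ᵀ γ̄ = 2 N̄ᵀ μ̄`. -/
theorem gammabar_formula
    (m : ℕ) (hm : 1 ≤ m)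
    (A U Q : Matrix (Fin m) (Fin m) ℝ)
    (hA : A.PosDef)
    (hU : U * Uᵀ = 1)
    (hG : ∀ i j : Fin m, i ≠ j → (Uᵀ * A * U) i j = 0)
    (hQ : IsUnit Q.det)
    (hskew : (2 : ℝ) • A = Q * Matrix.diagonal (fun i => A i i)
        + Matrix.diagonal (fun i => A i i) * Qᵀ)
    (μ : Fin m → ℝ) :
    let G := Uᵀ * A * U
    let Gsqrt := Matrix.diagonal fun i => Real.sqrt (G i i)
    let Ginvsqrt := Matrix.diagonal fun i => (Real.sqrt (G i i))⁻¹
    let D := Matrix.diagonal fun i => A i i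
    let Dsqrt := Matrix.diagonal fun i => Real.sqrt (A i i)
    let Dinvsqrt := Matrix.diagonal fun i => (Real.sqrt (A i i))⁻¹
    let Nbar := Gsqrt * Uᵀ * Dinvsqrt
    let Tbar := Ginvsqrt * Uᵀ * Q * Dsqrt - Nbar
    let mubar := (Ginvsqrt * Uᵀ) *ᵥ μ
    let gammabar := (2 : ℝ) • ((Gsqrt * Uᵀ * D⁻¹ * Q⁻¹) *ᵥ μ)
    Nbarᵀ *ᵥ gammabar - Tbarᵀ *ᵥ gammabar = (2 : ℝ) • (Nbarᵀ *ᵥ mubar) := by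
  intro G Gsqrt Ginvsqrt D Dsqrt Dinvsqrt Nbar Tbar mubar gammabar
  -- basic positivity facts
  have hUU : Uᵀ * U = 1 := mul_eq_one_comm.mp hU
  have hAd : ∀ i, 0 < A i i := by
    intro i
    have h := hA.dotProduct_mulVec_pos (x := Pi.single i 1) (by simpa using Function.ne_iff.mpr ⟨i, by simp⟩)
    simpa [dotProduct, mulVec_single, Pi.single_apply, Finset.sum_ite_eq] using h
  have hGpd : (Uᵀ * A * U).PosDef := by
    have hct : Uᵀ = Uᴴ := by ext i j; rfl
    rw [hct]
    refine Matrix.PosDef.of_dotProduct_mulVec_pos (isHermitian_conjTranspose_mul_mul U hA.1) fun x hx => ?_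
    have hx' : U *ᵥ x ≠ 0 := by
      intro h
      apply hx
      have := congrArg (fun v => Uᵀ *ᵥ v) h
      simpa [Matrix.mulVec_mulVec, hUU] using this
    simpa only [star_mulVec, dotProduct_mulVec, vecMul_vecMul] using hA.dotProduct_mulVec_pos hx'
  have hGd : ∀ i, 0 < G i i := by
    intro i
    have h := hGpd.dotProduct_mulVec_pos (x := Pi.single i 1) (by simpa using Function.ne_iff.mpr ⟨i, by simp⟩)
    simpa [dotProduct, mulVec_single, Pi.single_apply, Finset.sum_ite_eq] using h
  -- diagonal algebra (with the square-root matrices written out explicitly)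
  have hGdiag : Matrix.diagonal (fun i => G i i) = G := by
    ext i j
    rcases eq_or_ne i j with rfl | h
    · simp
    · rw [Matrix.diagonal_apply_ne _ h]
      exact (hG i j h).symm
  have hGG : (Matrix.diagonal fun i => Real.sqrt (G i i))
      * (Matrix.diagonal fun i => Real.sqrt (G i i)) = G := by
    rw [Matrix.diagonal_mul_diagonal,
      show (fun i => Real.sqrt (G i i) * Real.sqrt (G i i)) = fun i => G i i from
        funext fun i => Real.mul_self_sqrt (hGd i).le, hGdiag]
  have hGisGs : (Matrix.diagonal fun i => (Real.sqrt (G i i))⁻¹)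
      * (Matrix.diagonal fun i => Real.sqrt (G i i)) = 1 := by
    rw [Matrix.diagonal_mul_diagonal,
      show (fun i => (Real.sqrt (G i i))⁻¹ * Real.sqrt (G i i)) = fun _ => (1:ℝ) from
        funext fun i => inv_mul_cancel₀ (Real.sqrt_pos.mpr (hGd i)).ne', Matrix.diagonal_one]
  have hGsGis : (Matrix.diagonal fun i => Real.sqrt (G i i))
      * (Matrix.diagonal fun i => (Real.sqrt (G i i))⁻¹) = 1 := by
    rw [Matrix.diagonal_mul_diagonal,
      show (fun i => Real.sqrt (G i i) * (Real.sqrt (G i i))⁻¹) = fun _ => (1:ℝ) from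
        funext fun i => mul_inv_cancel₀ (Real.sqrt_pos.mpr (hGd i)).ne', Matrix.diagonal_one]
  have hDisD : (Matrix.diagonal fun i => (Real.sqrt (A i i))⁻¹) * D
      = (Matrix.diagonal fun i => Real.sqrt (A i i)) := by
    show _ * Matrix.diagonal (fun i => A i i) = _
    rw [Matrix.diagonal_mul_diagonal,
      show (fun i => (Real.sqrt (A i i))⁻¹ * A i i) = fun i => Real.sqrt (A i i) from
        funext fun i => by
          have h0 : Real.sqrt (A i i) ≠ 0 := (Real.sqrt_pos.mpr (hAd i)).ne'
          field_simp
          rw [Real.sq_sqrt (hAd i).le]]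
  have hDright : D * Matrix.diagonal (fun i => (A i i)⁻¹) = 1 := by
    show Matrix.diagonal (fun i => A i i) * _ = 1
    rw [Matrix.diagonal_mul_diagonal,
      show (fun i => A i i * (A i i)⁻¹) = fun _ => (1:ℝ) from
        funext fun i => mul_inv_cancel₀ (hAd i).ne', Matrix.diagonal_one]
  have hDDinv : D * D⁻¹ = 1 := by
    rw [Matrix.inv_eq_right_inv hDright]; exact hDright
  have hQQinv : Q * Q⁻¹ = 1 := Matrix.mul_nonsing_inv Q hQ
  have hUGU : U * G * Uᵀ = A := by
    show U * (Uᵀ * A * U) * Uᵀ = A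
    rw [show U * (Uᵀ * A * U) * Uᵀ = (U * Uᵀ) * A * (U * Uᵀ) by noncomm_ring, hU,
      Matrix.one_mul, Matrix.mul_one]
  -- the three core products
  have hNX : ((Matrix.diagonal fun i => Real.sqrt (G i i)) * Uᵀ
        * (Matrix.diagonal fun i => (Real.sqrt (A i i))⁻¹))ᵀ
      * ((Matrix.diagonal fun i => Real.sqrt (G i i)) * Uᵀ * D⁻¹ * Q⁻¹)
      = (Matrix.diagonal fun i => (Real.sqrt (A i i))⁻¹) * (A * (D⁻¹ * Q⁻¹)) := by
    simp only [Matrix.transpose_mul, Matrix.diagonal_transpose,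
      Matrix.transpose_transpose, Matrix.mul_assoc]
    rw [← Matrix.mul_assoc (Matrix.diagonal fun i => Real.sqrt (G i i))
        (Matrix.diagonal fun i => Real.sqrt (G i i)), hGG,
      show U * (G * (Uᵀ * (D⁻¹ * Q⁻¹))) = (U * G * Uᵀ) * (D⁻¹ * Q⁻¹) by
        simp only [Matrix.mul_assoc], hUGU]
  have hSX : ((Matrix.diagonal fun i => (Real.sqrt (G i i))⁻¹) * Uᵀ * Q
        * (Matrix.diagonal fun i => Real.sqrt (A i i)))ᵀ
      * ((Matrix.diagonal fun i => Real.sqrt (G i i)) * Uᵀ * D⁻¹ * Q⁻¹)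
      = (Matrix.diagonal fun i => Real.sqrt (A i i)) * (Qᵀ * (D⁻¹ * Q⁻¹)) := by
    simp only [Matrix.transpose_mul, Matrix.diagonal_transpose,
      Matrix.transpose_transpose, Matrix.mul_assoc]
    rw [← Matrix.mul_assoc (Matrix.diagonal fun i => (Real.sqrt (G i i))⁻¹)
        (Matrix.diagonal fun i => Real.sqrt (G i i)), hGisGs, Matrix.one_mul,
      ← Matrix.mul_assoc U Uᵀ, hU, Matrix.one_mul]
  have hNGU : ((Matrix.diagonal fun i => Real.sqrt (G i i)) * Uᵀ
        * (Matrix.diagonal fun i => (Real.sqrt (A i i))⁻¹))ᵀ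
      * ((Matrix.diagonal fun i => (Real.sqrt (G i i))⁻¹) * Uᵀ)
      = (Matrix.diagonal fun i => (Real.sqrt (A i i))⁻¹) := by
    simp only [Matrix.transpose_mul, Matrix.diagonal_transpose,
      Matrix.transpose_transpose, Matrix.mul_assoc]
    rw [← Matrix.mul_assoc (Matrix.diagonal fun i => Real.sqrt (G i i))
        (Matrix.diagonal fun i => (Real.sqrt (G i i))⁻¹), hGsGis, Matrix.one_mul, hU,
      Matrix.mul_one]
  -- key consequence of the skew condition
  have key : (2:ℝ) • ((Matrix.diagonal fun i => (Real.sqrt (A i i))⁻¹) * (A * (D⁻¹ * Q⁻¹)))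
      = (Matrix.diagonal fun i => (Real.sqrt (A i i))⁻¹)
        + (Matrix.diagonal fun i => Real.sqrt (A i i)) * (Qᵀ * (D⁻¹ * Q⁻¹)) := by
    have h := congrArg
      (fun M => (Matrix.diagonal fun i => (Real.sqrt (A i i))⁻¹) * M * (D⁻¹ * Q⁻¹)) hskew
    simp only [Matrix.mul_smul, Matrix.smul_mul, Matrix.mul_add, Matrix.add_mul,
      Matrix.mul_assoc] at h
    rw [h]
    rw [show Q * ((Matrix.diagonal fun i => A i i) * (D⁻¹ * Q⁻¹))
        = Q * ((D * D⁻¹) * Q⁻¹) by simp only [D, Matrix.mul_assoc],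
      hDDinv, Matrix.one_mul, hQQinv, Matrix.mul_one,
      ← Matrix.mul_assoc (Matrix.diagonal fun i => (Real.sqrt (A i i))⁻¹)
        (Matrix.diagonal fun i => A i i),
      show (Matrix.diagonal fun i => (Real.sqrt (A i i))⁻¹) * (Matrix.diagonal fun i => A i i)
        = (Matrix.diagonal fun i => Real.sqrt (A i i)) from hDisD]
  -- reduce the vector statement to the matrix identities
  simp only [gammabar, mubar, Nbar, Tbar, Gsqrt, Ginvsqrt, Dsqrt, Dinvsqrt,
    Matrix.mulVec_smul, Matrix.mulVec_mulVec, Matrix.transpose_sub, Matrix.sub_mul,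
    Matrix.sub_mulVec]
  rw [hNX, hSX, hNGU]
  set a := ((Matrix.diagonal fun i => (Real.sqrt (A i i))⁻¹) * (A * (D⁻¹ * Q⁻¹))) *ᵥ μ with ha
  set b := ((Matrix.diagonal fun i => Real.sqrt (A i i)) * (Qᵀ * (D⁻¹ * Q⁻¹))) *ᵥ μ with hb
  set c := (Matrix.diagonal fun i => (Real.sqrt (A i i))⁻¹) *ᵥ μ with hc
  have hkey' : (2:ℝ) • a = c + b := by
    rw [ha, hb, hc, ← Matrix.smul_mulVec, key, Matrix.add_mulVec]
  have step : (2:ℝ) • a - (2:ℝ) • (b - a) = (2:ℝ) • ((2:ℝ) • a) - (2:ℝ) • b := by module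
  rw [step, hkey']
  module
end

section
/- Let N and T be m×m real matrices whose j-th columns are denoted n_j and t_j respectively. Assume each n_j is a unit vector and that Nᵀ T is skew-symmetric. Fix j ≠ k in [m] with |⟨n_j, n_k⟩| < 1 and define n_{j,k} := (n_k − ⟨n_j, n_k⟩ n_j) / (1 − ⟨n_j, n_k⟩²)^{1/2}, and symmetrically n_{k,j} := (n_j − ⟨n_j, n_k⟩ n_k) / (1 − ⟨n_j, n_k⟩²)^{1/2}. Then ⟨t_j, n_{j,k}⟩ + ⟨t_k, n_{k,j}⟩ = 0. -/
open Matrix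

/-- Let `N` and `T` be `m × m` real matrices with columns `n_j` and `t_j`.
Assume each `n_j` is a unit vector and `Nᵀ T` is skew-symmetric. For `j ≠ k` with
`|⟨n_j, n_k⟩| < 1`, define `n_{j,k} := (n_k - ⟨n_j,n_k⟩ n_j)/√(1 - ⟨n_j,n_k⟩²)` and
symmetrically `n_{k,j}`. Then `⟨t_j, n_{j,k}⟩ + ⟨t_k, n_{k,j}⟩ = 0`. -/
theorem edge_boundary_terms_cancel
    (m : ℕ) (N T : Matrix (Fin m) (Fin m) ℝ)
    (hunit : ∀ j : Fin m, ∑ i, (N i j) ^ 2 = 1)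
    (hskew : (Nᵀ * T)ᵀ = -(Nᵀ * T))
    (j k : Fin m) (hjk : j ≠ k)
    (hc : |∑ i, N i j * N i k| < 1) :
    let c : ℝ := ∑ i, N i j * N i k
    let njk : Fin m → ℝ := fun i => (N i k - c * N i j) / Real.sqrt (1 - c ^ 2)
    let nkj : Fin m → ℝ := fun i => (N i j - c * N i k) / Real.sqrt (1 - c ^ 2)
    (∑ i, T i j * njk i) + (∑ i, T i k * nkj i) = 0 := by
  intro c njk nkj
  have key : ∀ a b : Fin m, ∑ i, N i a * T i b = -∑ i, N i b * T i a := by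
    intro a b
    have h := congrFun (congrFun hskew b) a
    simpa [Matrix.mul_apply, Matrix.transpose_apply, Finset.sum_neg_distrib,
      ← Finset.sum_neg_distrib] using h
  have dj : ∑ i, N i j * T i j = 0 := by have := key j j; linarith
  have dk : ∑ i, N i k * T i k = 0 := by have := key k k; linarith
  have hkj := key k j
  have heq : (∑ i, T i j * njk i) + (∑ i, T i k * nkj i)
      = ((∑ i, N i k * T i j) - c * (∑ i, N i j * T i j)
        + ((∑ i, N i j * T i k) - c * (∑ i, N i k * T i k))) / Real.sqrt (1 - c ^ 2) := by
    simp only [njk, nkj, mul_div_assoc']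
    rw [← Finset.sum_div, ← Finset.sum_div, ← add_div]
    congr 1
    simp only [Finset.mul_sum, ← Finset.sum_sub_distrib, ← Finset.sum_add_distrib]
    exact Finset.sum_congr rfl fun i _ => by ring
  rw [heq, dj, dk, hkj]
  ring
end

section
/- Fix n ≥ 2 and θ > 0, and suppose θ^L_{i,j} = θ^R_{i,j} = θ for all i ∈ [n], j ∈ [n−1]. Then the matrices Q and Q^{(2)} defined below are jointly completely-𝒮: for every nonempty subset J ⊆ [n−1] there exists γ ∈ (0,∞)^J such that Σ_{i∈J} γ_i q_{i,j} ≥ 1 for every j ∈ J, and Σ_{i∈J} γ_i q^{(2)}_{i,(k,ℓ)} ≥ 1 for every pair (k,ℓ) ∈ J × J whose column q^{(2)}_{·,(k,ℓ)} is not the zero vector. -/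
set_option maxHeartbeats 1000000


/-- The speed change matrix `V = (v_{i,j})` of the paper, for `n = m + 1` particles
(0-based indices: the condition `j = i - 1` reads `(j : ℕ) + 1 = (i : ℕ)`). -/
def speedV (m : ℕ) (θL θR : Fin (m + 1) → Fin m → ℝ) (i : Fin (m + 1)) (j : Fin m) : ℝ :=
  if (j : ℕ) + 1 = (i : ℕ) then θR i j
  else if (j : ℕ) = (i : ℕ) then -(θL i j)
  else θR i j - θL i j

/-- The reflection matrix `Q = (q_{j,j'})` of the paper: `q_{j,j'} = v_{j+1,j'} - v_{j,j'}`. -/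
def reflQ (m : ℕ) (θL θR : Fin (m + 1) → Fin m → ℝ) (j j' : Fin m) : ℝ :=
  speedV m θL θR j.succ j' - speedV m θL θR j.castSucc j'

/-- The `(n-1) × (n-1)²` matrix `Q⁽²⁾` of the paper, rows indexed by `i ∈ Fin m`,
columns by pairs `(k, ℓ)`. -/
def Qtwo (m : ℕ) (θL θR : Fin (m + 1) → Fin m → ℝ) (i k ℓ : Fin m) : ℝ :=
  if (k : ℕ) + 1 = (i : ℕ) ∧ (ℓ : ℕ) + 1 ≠ (i : ℕ) then -(θL i.castSucc ℓ)
  else if k = i ∧ ℓ ≠ i then θL i.succ ℓ + θR i.castSucc ℓ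
  else if (k : ℕ) = (i : ℕ) + 1 ∧ (ℓ : ℕ) ≠ (i : ℕ) + 1 then -(θR i.succ ℓ)
  else 0

/-- For the constant specification `θ^L_{i,j} = θ^R_{i,j} = θ > 0`, the matrices `Q`
and `Q⁽²⁾` are jointly completely-𝒮: for every nonempty `J ⊆ [n-1]` there exists a
positive vector `γ` (indexed by `J`) with `∑_{i∈J} γ_i q_{i,j} ≥ 1` for all `j ∈ J`,
and `∑_{i∈J} γ_i q⁽²⁾_{i,(k,ℓ)} ≥ 1` for all `(k,ℓ) ∈ J × J` whose column of `Q⁽²⁾`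
is not identically zero. -/
theorem jointly_completelyS_constant_spec
    (m : ℕ) (hm : 1 ≤ m) (θ : ℝ) (hθ : 0 < θ)
    (θL θR : Fin (m + 1) → Fin m → ℝ)
    (hL : ∀ i j, θL i j = θ) (hR : ∀ i j, θR i j = θ) :
    ∀ J : Finset (Fin m), J.Nonempty →
      ∃ γ : Fin m → ℝ, (∀ i ∈ J, 0 < γ i) ∧
        (∀ j ∈ J, 1 ≤ ∑ i ∈ J, γ i * reflQ m θL θR i j) ∧
        (∀ k ∈ J, ∀ ℓ ∈ J, (∃ i : Fin m, Qtwo m θL θR i k ℓ ≠ 0) →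
          1 ≤ ∑ i ∈ J, γ i * Qtwo m θL θR i k ℓ) := by
  have hq : ∀ i j : Fin m, reflQ m θL θR i j =
      if (i : ℕ) + 1 = (j : ℕ) then -θ
      else if (j : ℕ) + 1 = (i : ℕ) then -θ
      else if (i : ℕ) = (j : ℕ) then 2*θ else 0 := by
    intro i j
    simp only [reflQ, speedV, hL, hR, Fin.val_succ, Fin.coe_castSucc]
    split_ifs <;> first | ring1 | (exfalso; omega)
  intro J hJ
  set γ : Fin m → ℝ := fun i => ((m:ℝ)^2 - ((i:ℕ):ℝ)^2) / θ with hγdef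
  have hγpos : ∀ i : Fin m, 0 < γ i := by
    intro i
    apply div_pos _ hθ
    have h1 : ((i:ℕ):ℝ) < (m:ℝ) := by exact_mod_cast i.isLt
    have h0 : (0:ℝ) ≤ ((i:ℕ):ℝ) := by positivity
    nlinarith
  have key : ∀ j ∈ J, 1 ≤ ∑ i ∈ J, γ i * reflQ m θL θR i j := by
    intro j hj
    set g : Fin m → ℝ := fun i =>
      if (i:ℕ) + 1 = (j:ℕ) then -θ * γ i else if (j:ℕ) + 1 = (i:ℕ) then -θ * γ i else 0
      with hgdef
    have hgnonpos : ∀ i : Fin m, g i ≤ 0 := by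
      intro i
      have := (hγpos i).le
      simp only [hgdef]
      split_ifs <;> nlinarith
    have hsplit : ∑ i ∈ J, γ i * reflQ m θL θR i j
        = γ j * (2*θ) + ∑ i ∈ J.erase j, γ i * reflQ m θL θR i j := by
      rw [← Finset.add_sum_erase J _ hj, hq j j]
      simp
    have hoff : ∀ i ∈ J.erase j, g i ≤ γ i * reflQ m θL θR i j := by
      intro i hi
      have hij : (i:ℕ) ≠ (j:ℕ) := by
        have := Finset.ne_of_mem_erase hi
        simpa [Fin.ext_iff] using this
      rw [hq]
      simp only [hgdef]
      split_ifs <;> first | exact le_of_eq (by ring) | (exfalso; omega)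
    have h1 : ∑ i ∈ Finset.univ, g i ≤ ∑ i ∈ J.erase j, γ i * reflQ m θL θR i j := by
      have h2 : ∑ i ∈ J.erase j, (-g i) ≤ ∑ i ∈ Finset.univ, (-g i) :=
        Finset.sum_le_sum_of_subset_of_nonneg (Finset.subset_univ _)
          (fun i _ _ => neg_nonneg.2 (hgnonpos i))
      have h3 : ∑ i ∈ Finset.univ, g i ≤ ∑ i ∈ J.erase j, g i := by
        rw [Finset.sum_neg_distrib, Finset.sum_neg_distrib] at h2
        linarith
      exact h3.trans (Finset.sum_le_sum hoff)
    -- compute the full sum of g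
    set A : Finset (Fin m) := Finset.univ.filter (fun i => (i:ℕ) + 1 = (j:ℕ)) with hAdef
    set B : Finset (Fin m) := Finset.univ.filter (fun i => (j:ℕ) + 1 = (i:ℕ)) with hBdef
    have hg2 : ∀ i : Fin m, g i =
        (if (i:ℕ) + 1 = (j:ℕ) then -θ * γ i else 0)
        + (if (j:ℕ) + 1 = (i:ℕ) then -θ * γ i else 0) := by
      intro i
      simp only [hgdef]
      split_ifs <;> first | ring1 | (exfalso; omega)
    have hsumg : ∑ i ∈ Finset.univ, g i
        = -θ * ∑ i ∈ A, γ i + -θ * ∑ i ∈ B, γ i := by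
      simp_rw [hg2]
      rw [Finset.sum_add_distrib, ← Finset.sum_filter, ← Finset.sum_filter,
        ← Finset.mul_sum, ← Finset.mul_sum]
    set cA : ℝ := ((m:ℝ)^2 - (((j:ℕ):ℝ) - 1)^2) / θ with hcAdef
    set cB : ℝ := ((m:ℝ)^2 - (((j:ℕ):ℝ) + 1)^2) / θ with hcBdef
    have hjm : ((j:ℕ):ℝ) + 1 ≤ (m:ℝ) := by exact_mod_cast j.isLt
    have hj0 : (0:ℝ) ≤ ((j:ℕ):ℝ) := by positivity
    have hm1 : (1:ℝ) ≤ (m:ℝ) := by exact_mod_cast hm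
    have hcA : 0 ≤ cA := by
      apply div_nonneg _ hθ.le
      nlinarith [mul_nonneg (by linarith : (0:ℝ) ≤ (m:ℝ) - ((j:ℕ):ℝ) + 1)
        (by linarith : (0:ℝ) ≤ (m:ℝ) + ((j:ℕ):ℝ) - 1)]
    have hcB : 0 ≤ cB := by
      apply div_nonneg _ hθ.le
      nlinarith [mul_nonneg (by linarith : (0:ℝ) ≤ (m:ℝ) - ((j:ℕ):ℝ) - 1)
        (by linarith : (0:ℝ) ≤ (m:ℝ) + ((j:ℕ):ℝ) + 1)]
    have hboundA : ∑ i ∈ A, γ i ≤ cA := by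
      have hval : ∀ i ∈ A, γ i = cA := by
        intro i hi
        have hi' : (i:ℕ) + 1 = (j:ℕ) := by simpa [hAdef] using hi
        have : ((i:ℕ):ℝ) = ((j:ℕ):ℝ) - 1 := by
          have := congrArg (fun n : ℕ => (n:ℝ)) hi'
          push_cast at this
          linarith
        simp [hγdef, hcAdef, this]
      have hcard : A.card ≤ 1 := by
        apply Finset.card_le_one.2
        intro a ha b hb
        have ha' : (a:ℕ) + 1 = (j:ℕ) := by simpa [hAdef] using ha
        have hb' : (b:ℕ) + 1 = (j:ℕ) := by simpa [hAdef] using hb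
        exact Fin.ext (by omega)
      calc ∑ i ∈ A, γ i = ∑ _i ∈ A, cA := Finset.sum_congr rfl hval
        _ = (A.card : ℝ) * cA := by rw [Finset.sum_const, nsmul_eq_mul]
        _ ≤ 1 * cA := by
            apply mul_le_mul_of_nonneg_right _ hcA
            exact_mod_cast hcard
        _ = cA := one_mul cA
    have hboundB : ∑ i ∈ B, γ i ≤ cB := by
      have hval : ∀ i ∈ B, γ i = cB := by
        intro i hi
        have hi' : (j:ℕ) + 1 = (i:ℕ) := by simpa [hBdef] using hi
        have : ((i:ℕ):ℝ) = ((j:ℕ):ℝ) + 1 := by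
          have := congrArg (fun n : ℕ => (n:ℝ)) hi'
          push_cast at this
          linarith
        simp [hγdef, hcBdef, this]
      have hcard : B.card ≤ 1 := by
        apply Finset.card_le_one.2
        intro a ha b hb
        have ha' : (j:ℕ) + 1 = (a:ℕ) := by simpa [hBdef] using ha
        have hb' : (j:ℕ) + 1 = (b:ℕ) := by simpa [hBdef] using hb
        exact Fin.ext (by omega)
      calc ∑ i ∈ B, γ i = ∑ _i ∈ B, cB := Finset.sum_congr rfl hval
        _ = (B.card : ℝ) * cB := by rw [Finset.sum_const, nsmul_eq_mul]
        _ ≤ 1 * cB := by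
            apply mul_le_mul_of_nonneg_right _ hcB
            exact_mod_cast hcard
        _ = cB := one_mul cB
    -- put everything together
    have hθγj : θ * γ j = (m:ℝ)^2 - ((j:ℕ):ℝ)^2 := by
      simp only [hγdef]
      field_simp
    have hθcA : θ * cA = (m:ℝ)^2 - (((j:ℕ):ℝ) - 1)^2 := by
      simp only [hcAdef]; field_simp
    have hθcB : θ * cB = (m:ℝ)^2 - (((j:ℕ):ℝ) + 1)^2 := by
      simp only [hcBdef]; field_simp
    have hfin : γ j * (2*θ) + (-θ * cA + -θ * cB) = 2 := by nlinarith [hθγj, hθcA, hθcB]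
    have hAB : -θ * ∑ i ∈ A, γ i + -θ * ∑ i ∈ B, γ i ≥ -θ * cA + -θ * cB := by
      have := mul_le_mul_of_nonneg_left hboundA hθ.le
      have := mul_le_mul_of_nonneg_left hboundB hθ.le
      nlinarith
    rw [hsplit]
    have : ∑ i ∈ Finset.univ, g i ≥ -θ * cA + -θ * cB := by rw [hsumg]; linarith [hAB]
    linarith
  refine ⟨γ, fun i _ => hγpos i, key, ?_⟩
  intro k hk ℓ hℓ hcol
  obtain ⟨i0, hi0⟩ := hcol
  have hlk : (ℓ:ℕ) ≠ (k:ℕ) := by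
    intro h
    apply hi0
    have : ℓ = k := Fin.ext h
    subst this
    simp only [Qtwo, Fin.ext_iff]
    split_ifs <;> first | rfl | (exfalso; omega)
  have hQ2 : ∀ i : Fin m, Qtwo m θL θR i k ℓ = reflQ m θL θR i k := by
    intro i
    rw [hq]
    simp only [Qtwo, hL, hR, Fin.ext_iff]
    split_ifs <;> first | ring1 | (exfalso; omega)
  calc (1:ℝ) ≤ ∑ i ∈ J, γ i * reflQ m θL θR i k := key k hk
    _ = ∑ i ∈ J, γ i * Qtwo m θL θR i k ℓ := by
        exact Finset.sum_congr rfl (fun i _ => by rw [hQ2])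
end

section
/- Fix n ≥ 3 and θ > 0, and consider the 'frozen' specification: θ^L_{j,j} = θ^R_{j+1,j} = θ for all j ∈ [n−1], and θ^L_{i,j} = 0, θ^R_{i,j} = 0 for all other index pairs. Then there is no γ ∈ (0,∞)^{n−1} such that Σ_{i=1}^{n−1} γ_i q_{i,j} ≥ 1 for every j ∈ [n−1] and Σ_{i=1}^{n−1} γ_i q^{(2)}_{i,(k,ℓ)} ≥ 1 for every pair (k,ℓ) ∈ [n−1]² whose column q^{(2)}_{·,(k,ℓ)} is not the zero vector. In particular, the jointly completely-𝒮 condition (Assumption 1(b) of the paper) fails for J = [n−1]. -/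
lemma frozen_Qtwo_vals (m : ℕ) (hm : 2 ≤ m) (θ : ℝ)
    (θL θR : Fin (m + 1) → Fin m → ℝ)
    (hL : ∀ i j, θL i j = if (i : ℕ) = (j : ℕ) then θ else 0)
    (hR : ∀ i j, θR i j = if (i : ℕ) = (j : ℕ) + 1 then θ else 0)
    (i : Fin m) :
    Qtwo m θL θR i ⟨0, by omega⟩ ⟨1, by omega⟩ =
      (if (i : ℕ) = 0 then θ else if (i : ℕ) = 1 then -θ else 0) ∧
    Qtwo m θL θR i ⟨1, by omega⟩ ⟨0, by omega⟩ =
      (if (i : ℕ) = 0 then -θ else if (i : ℕ) = 1 then θ else 0) := by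
  obtain ⟨iv, hiv⟩ := i
  simp only [Qtwo, hL, hR, Fin.val_succ, Fin.coe_castSucc, Fin.mk.injEq, Fin.ext_iff]
  rcases iv with _ | _ | iv <;> norm_num

/-- For the 'frozen' specification with `n ≥ 3` particles (`m = n - 1 ≥ 2` gaps),
the jointly completely-𝒮 condition (Assumption 1(b) of the paper) fails for
`J = [n-1]`: there is no positive vector `γ` with `∑_i γ_i q_{i,j} ≥ 1` for all `j`
and `∑_i γ_i q⁽²⁾_{i,(k,ℓ)} ≥ 1` for all pairs `(k,ℓ)` whose column of `Q⁽²⁾` is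
not identically zero. -/
theorem frozen_spec_not_jointly_completelyS
    (m : ℕ) (hm : 2 ≤ m) (θ : ℝ) (hθ : 0 < θ)
    (θL θR : Fin (m + 1) → Fin m → ℝ)
    (hL : ∀ i j, θL i j = if (i : ℕ) = (j : ℕ) then θ else 0)
    (hR : ∀ i j, θR i j = if (i : ℕ) = (j : ℕ) + 1 then θ else 0) :
    ¬ ∃ γ : Fin m → ℝ, (∀ i, 0 < γ i) ∧
        (∀ j : Fin m, 1 ≤ ∑ i, γ i * reflQ m θL θR i j) ∧
        (∀ k ℓ : Fin m, (∃ i : Fin m, Qtwo m θL θR i k ℓ ≠ 0) →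
          1 ≤ ∑ i, γ i * Qtwo m θL θR i k ℓ) := by
  rintro ⟨γ, hγ, hQ, h2⟩
  have hθ' : θ ≠ 0 := ne_of_gt hθ
  have h01 := h2 ⟨0, by omega⟩ ⟨1, by omega⟩ ⟨⟨0, by omega⟩, by
    rw [(frozen_Qtwo_vals m hm θ θL θR hL hR _).1]; simpa using hθ'⟩
  have h10 := h2 ⟨1, by omega⟩ ⟨0, by omega⟩ ⟨⟨1, by omega⟩, by
    rw [(frozen_Qtwo_vals m hm θ θL θR hL hR _).2]; simpa using hθ'⟩
  have key : ∀ i : Fin m,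
      γ i * Qtwo m θL θR i ⟨0, by omega⟩ ⟨1, by omega⟩ +
      γ i * Qtwo m θL θR i ⟨1, by omega⟩ ⟨0, by omega⟩ = 0 := by
    intro i
    rw [(frozen_Qtwo_vals m hm θ θL θR hL hR i).1,
      (frozen_Qtwo_vals m hm θ θL θR hL hR i).2]
    split_ifs <;> ring
  have hsum : (∑ i, γ i * Qtwo m θL θR i ⟨0, by omega⟩ ⟨1, by omega⟩) +
      (∑ i, γ i * Qtwo m θL θR i ⟨1, by omega⟩ ⟨0, by omega⟩) = 0 := by
    rw [← Finset.sum_add_distrib]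
    exact Finset.sum_eq_zero fun i _ => key i
  linarith
end
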